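/- arXiv:2107.08744 — 3 statements merged into one kernel-verified Lean document; each statement's English description precedes it below -/
import Mathlib

section
/- Let X be a set, I ⊆ X, and let f, g be permutations of X such that the support of g is contained in I and f(I) ∩ I = ∅. Then the commutator [g,f] := g ∘ f ∘ g⁻¹ ∘ f⁻¹ agrees with g on all points of I, and the support of [g,f] is contained in I ∪ f(I). -/
theorem stmt_7 {X : Type*} (I : Set X) (f g : Equiv.Perm X)
    (hg : {x : X | g x ≠ x} ⊆ I) (hf : f '' I ∩ I = ∅) :
    (∀ x ∈ I, (g * f * g⁻¹ * f⁻¹) x = g x) ∧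
    {x : X | (g * f * g⁻¹ * f⁻¹) x ≠ x} ⊆ I ∪ f '' I := by
  have hfix : ∀ x : X, x ∉ I → g x = x := by
    intro x hx
    by_contra h
    exact hx (hg h)
  have hginv : ∀ x : X, x ∉ I → g⁻¹ x = x := by
    intro x hx
    have h := hfix x hx
    calc g⁻¹ x = g⁻¹ (g x) := by rw [h]
    _ = x := by simp
  have key : ∀ x : X, x ∉ f '' I → (g * f * g⁻¹ * f⁻¹) x = g x := by
    intro x hx
    have hfi : f⁻¹ x ∉ I := by
      intro h
      exact hx ⟨f⁻¹ x, h, by simp⟩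
    simp only [Equiv.Perm.mul_apply]
    rw [hginv _ hfi]
    simp
  constructor
  · intro x hxI
    apply key
    intro hx
    have : x ∈ f '' I ∩ I := ⟨hx, hxI⟩
    rw [hf] at this
    exact this
  · intro x hx
    by_contra h
    simp only [Set.mem_union, not_or] at h
    obtain ⟨h1, h2⟩ := h
    have := key x h2
    exact hx (this.trans (hfix x h1))
end

section
/- Let X be a set, I ⊆ X, and let f, g, h be permutations of X such that the supports of g and h are both contained in I and f(I) ∩ I = ∅. Then [[g,f],h] = [g,h], where [a,b] denotes the commutator a ∘ b ∘ a⁻¹ ∘ b⁻¹. -/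
open scoped commutatorElement
theorem stmt_8 {X : Type*} (I : Set X) (f g h : Equiv.Perm X)
    (hg : {x : X | g x ≠ x} ⊆ I) (hh : {x : X | h x ≠ x} ⊆ I)
    (hf : f '' I ∩ I = ∅) :
    ⁅⁅g, f⁆, h⁆ = ⁅g, h⁆ := by
  have hdis : (f * g⁻¹ * f⁻¹).Disjoint h := by
    intro x
    by_cases hx : h x = x
    · exact Or.inr hx
    · left
      have hxI : x ∈ I := hh hx
      have hfi : f⁻¹ x ∉ I := by
        intro hmem
        have : x ∈ f '' I ∩ I := ⟨⟨f⁻¹ x, hmem, f.apply_symm_apply x⟩, hxI⟩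
        simp [hf] at this
      have hgfix : g (f⁻¹ x) = f⁻¹ x := by
        by_contra hne
        exact hfi (hg hne)
      have hginv : g⁻¹ (f⁻¹ x) = f⁻¹ x := by
        conv_lhs => rw [← hgfix]
        exact g.symm_apply_apply _
      simpa [Equiv.Perm.mul_apply] using congrArg f hginv
  have hc : Commute (f * g⁻¹ * f⁻¹) h := hdis.commute
  have key : (f * g⁻¹ * f⁻¹) * h * (f * g⁻¹ * f⁻¹)⁻¹ = h := by
    rw [hc.eq]; group
  simp only [commutatorElement_def]
  have : g * f * g⁻¹ * f⁻¹ = g * (f * g⁻¹ * f⁻¹) := by group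
  rw [this]
  calc g * (f * g⁻¹ * f⁻¹) * h * (g * (f * g⁻¹ * f⁻¹))⁻¹ * h⁻¹
      = g * ((f * g⁻¹ * f⁻¹) * h * (f * g⁻¹ * f⁻¹)⁻¹) * g⁻¹ * h⁻¹ := by group
    _ = g * h * g⁻¹ * h⁻¹ := by rw [key]
end

section
/- Let X be a set, G a subgroup of the permutation group of X, N and L subgroups of G with N normalized by L, and let f ∈ N. Suppose I ⊆ X satisfies f(I) ∩ I = ∅. Then for all g, h ∈ L whose supports are contained in I, the commutator [g,h] belongs to N. -/
open scoped commutatorElement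

theorem stmt_9 {X : Type*} (G N L : Subgroup (Equiv.Perm X))
    (hNG : N ≤ G) (hLG : L ≤ G)
    (hnorm : ∀ l ∈ L, ∀ n : Equiv.Perm X, n ∈ N ↔ l * n * l⁻¹ ∈ N)
    (f : Equiv.Perm X) (hf : f ∈ N) (I : Set X) (hI : f '' I ∩ I = ∅) :
    ∀ g h : Equiv.Perm X, g ∈ L → h ∈ L →
      {x : X | g x ≠ x} ⊆ I → {x : X | h x ≠ x} ⊆ I → ⁅g, h⁆ ∈ N := by
  intro g h hg hh hgI hhI
  -- f * g * f⁻¹ commutes with h since their supports are disjoint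
  have hc : Commute (f * g * f⁻¹) h := by
    apply Equiv.Perm.Disjoint.commute
    intro x
    by_cases hx : h x = x
    · exact Or.inr hx
    · left
      have hxI : x ∈ I := hhI hx
      by_contra hfx
      have hg' : g (f⁻¹ x) ≠ f⁻¹ x := by
        intro he
        apply hfx
        rw [Equiv.Perm.mul_apply, Equiv.Perm.mul_apply, he]
        simp
      have hmem : f⁻¹ x ∈ I := hgI hg'
      have : x ∈ f '' I ∩ I := ⟨⟨f⁻¹ x, hmem, by simp⟩, hxI⟩
      rw [hI] at this
      exact this
  -- the key group identity
  have key : (f * g⁻¹ * f⁻¹) * h * (f * g * f⁻¹) = h := by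
    have h1 : (f * g⁻¹ * f⁻¹) * h * (f * g * f⁻¹)
        = (f * g⁻¹ * f⁻¹) * (f * g * f⁻¹) * h := by
      rw [mul_assoc, ← hc.eq, ← mul_assoc]
    rw [h1]
    group
  have e : ⁅⁅g, f⁆, h⁆ = ⁅g, h⁆ := by
    have e1 : ⁅⁅g, f⁆, h⁆ = g * ((f * g⁻¹ * f⁻¹) * h * (f * g * f⁻¹)) * g⁻¹ * h⁻¹ := by
      simp only [commutatorElement_def]
      group
    rw [e1, key, commutatorElement_def]
  -- membership
  have hn : ⁅g, f⁆ ∈ N := by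
    have h1 : g * f * g⁻¹ ∈ N := (hnorm g hg f).mp hf
    have : ⁅g, f⁆ = (g * f * g⁻¹) * f⁻¹ := by group
    rw [this]
    exact N.mul_mem h1 (N.inv_mem hf)
  have hmem : ⁅⁅g, f⁆, h⁆ ∈ N := by
    have h2 : h * ⁅g, f⁆⁻¹ * h⁻¹ ∈ N := (hnorm h hh _).mp (N.inv_mem hn)
    have : ⁅⁅g, f⁆, h⁆ = ⁅g, f⁆ * (h * ⁅g, f⁆⁻¹ * h⁻¹) := by group
    rw [this]
    exact N.mul_mem hn h2
  rw [← e]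
  exact hmem
end
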